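/- Let (n_k) be lacunary with ratio α > 1 and σ_n the Fejér mean operator on L²(ℝ). For any bounded sequence (c_k), the operator G f = ∑_{k=1}^{∞} c_k (σ_{n_{k+1}} f − σ_{n_k} f) is well-defined on L²(ℝ) and satisfies a strong type (2,2) inequality: ‖G f‖₂ ≤ C ‖(c_k)‖_∞ ‖f‖₂ for some constant C depending only on α. -/

import Mathlib

open MeasureTheory FourierTransform Filter Finset
open scoped ENNReal NNReal

noncomputable def fejerSymbol (n : ℕ) (x : ℝ) : ℝ := max 0 (1 - |x| / (n + 1))

lemma fejerSymbol_nonneg (m : ℕ) (x : ℝ) : 0 ≤ fejerSymbol m x := le_max_left _ _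

lemma fejerSymbol_le_one (m : ℕ) (x : ℝ) : fejerSymbol m x ≤ 1 := by
  have h : 0 ≤ |x| / ((m : ℝ) + 1) := by positivity
  exact max_le zero_le_one (by linarith)

lemma fejerSymbol_mono {a b : ℕ} (h : a ≤ b) (x : ℝ) : fejerSymbol a x ≤ fejerSymbol b x := by
  have hc : (a:ℝ) ≤ b := Nat.cast_le.mpr h
  have h2 : |x| / ((b : ℝ) + 1) ≤ |x| / ((a : ℝ) + 1) :=
    div_le_div_of_nonneg_left (abs_nonneg x) (by positivity) (by linarith)
  exact max_le_max le_rfl (by linarith)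

lemma one_sub_fejerSymbol_le (m : ℕ) (x : ℝ) : 1 - fejerSymbol m x ≤ |x| / ((m : ℝ) + 1) := by
  have := le_max_right (0:ℝ) (1 - |x| / ((m:ℝ) + 1))
  unfold fejerSymbol
  linarith

lemma sum_Ioc_telescope (g : ℕ → ℝ) : ∀ {a b : ℕ}, a ≤ b →
    ∑ k ∈ Finset.Ioc a b, (g (k+1) - g k) = g (b+1) - g (a+1) := by
  intro a b
  induction b with
  | zero => intro hab; interval_cases a; simp
  | succ b ih =>
    intro hab
    rcases Nat.lt_or_ge a (b+1) with h | h
    · have hab' : a ≤ b := Nat.lt_succ_iff.mp h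
      rw [Finset.sum_Ioc_succ_top hab', ih hab']
      ring
    · have : a = b + 1 := le_antisymm hab h
      subst this
      simp

theorem stmt_8
    (n : ℕ → ℕ) (hn : ∀ k, 0 < n k) (α : ℝ) (hα : 1 < α)
    (hlac : ∀ k, α ≤ (n (k + 1) : ℝ) / (n k : ℝ))
    -- `F` is the Plancherel (Fourier) transform on `L²(ℝ)`.
    (F : Lp ℂ 2 (volume : Measure ℝ) ≃ₗᵢ[ℂ] Lp ℂ 2 (volume : Measure ℝ))
    (hF : ∀ f : Lp ℂ 2 (volume : Measure ℝ), Integrable f volume →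
      (F f : ℝ → ℂ) =ᵐ[volume] VectorFourier.fourierIntegral Real.fourierChar volume (innerₗ ℝ) (f : ℝ → ℂ))
    -- `σ m` is the Fejér mean: the Fourier multiplier with symbol `fejerSymbol m`.
    (σ : ℕ → (Lp ℂ 2 (volume : Measure ℝ) →ₗ[ℂ] Lp ℂ 2 (volume : Measure ℝ)))
    (hσ : ∀ m f, (F (σ m f) : ℝ → ℂ) =ᵐ[volume]
      fun x => (fejerSymbol m x : ℂ) * (F f : ℝ → ℂ) x) :
    ∃ C : ℝ, ∀ c : ℕ → ℂ, (∃ M, ∀ k, ‖c k‖ ≤ M) →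
      ∀ f : Lp ℂ 2 (volume : Measure ℝ),
        ∃ g : Lp ℂ 2 (volume : Measure ℝ),
          Filter.Tendsto
            (fun N => ∑ k ∈ Finset.Icc 1 N, c k • (σ (n (k + 1)) f - σ (n k) f))
            Filter.atTop (nhds g) ∧
          ‖g‖ ≤ C * (⨆ k, ‖c k‖) * ‖f‖ := by
  refine ⟨1, ?_⟩
  intro c hc f
  obtain ⟨M₀, hM₀⟩ := hc
  set M : ℝ := ⨆ k, ‖c k‖ with hMdef
  have hbdd : BddAbove (Set.range fun k => ‖c k‖) := ⟨M₀, by rintro _ ⟨k, rfl⟩; exact hM₀ k⟩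
  have hcM : ∀ k, ‖c k‖ ≤ M := fun k => le_ciSup hbdd k
  have hMnn : 0 ≤ M := le_trans (norm_nonneg _) (hcM 0)
  -- basic facts about n
  have hnlt : ∀ k, n k < n (k + 1) := by
    intro k
    have h0 : (0:ℝ) < n k := by exact_mod_cast hn k
    have h1 := hlac k
    have h2 : α * (n k : ℝ) ≤ n (k+1) := by
      rw [← le_div_iff₀ h0]; exact h1
    have : (n k : ℝ) < n (k+1) := by nlinarith
    exact_mod_cast this
  have hsm : StrictMono n := strictMono_nat_of_lt_succ hnlt
  have hnmono : Monotone n := hsm.monotone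
  have hntend : Tendsto (fun k => (n k : ℝ)) atTop atTop :=
    tendsto_atTop_mono (fun k => by exact_mod_cast hsm.le_apply)
      tendsto_natCast_atTop_atTop
  set u : ℝ → ℂ := (F f : ℝ → ℂ) with hudef
  have hu : MemLp u 2 (volume : Measure ℝ) := Lp.memLp (F f)
  -- the partial sums
  set T : ℕ → Lp ℂ 2 (volume : Measure ℝ) := fun k => σ (n (k+1)) f - σ (n k) f with hTdef
  set S : ℕ → ℕ → Lp ℂ 2 (volume : Measure ℝ) := fun a b => ∑ k ∈ Finset.Ioc a b, c k • T k
    with hSdef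
  -- the multiplier of T k
  have hFT : ∀ k, (F (T k) : ℝ → ℂ) =ᵐ[volume]
      fun x => ((fejerSymbol (n (k+1)) x - fejerSymbol (n k) x : ℝ) : ℂ) * u x := by
    intro k
    have h1 : F (T k) = F (σ (n (k+1)) f) - F (σ (n k) f) := by
      simp [hTdef, map_sub]
    rw [h1]
    filter_upwards [Lp.coeFn_sub (F (σ (n (k+1)) f)) (F (σ (n k) f)), hσ (n (k+1)) f,
      hσ (n k) f] with x hx h2 h3
    rw [hx]
    simp only [Pi.sub_apply, h2, h3]
    push_cast
    ring
  -- Fourier transform of partial sums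
  have hFS : ∀ a b, (F (S a b) : ℝ → ℂ) =ᵐ[volume]
      fun x => (∑ k ∈ Finset.Ioc a b,
        c k * ((fejerSymbol (n (k+1)) x - fejerSymbol (n k) x : ℝ) : ℂ)) * u x := by
    intro a b
    have key : ∀ s : Finset ℕ, (F (∑ k ∈ s, c k • T k) : ℝ → ℂ) =ᵐ[volume]
        fun x => (∑ k ∈ s,
          c k * ((fejerSymbol (n (k+1)) x - fejerSymbol (n k) x : ℝ) : ℂ)) * u x := by
      intro s
      induction s using Finset.induction_on with
      | empty =>
        simp only [Finset.sum_empty, map_zero]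
        filter_upwards [Lp.coeFn_zero ℂ 2 (volume : Measure ℝ)] with x hx
        simp [hx]
      | insert _ _ hnot ih =>
        rename_i j s'
        rw [Finset.sum_insert hnot, map_add, _root_.map_smul]
        filter_upwards [Lp.coeFn_add (c j • F (T j)) (F (∑ k ∈ s', c k • T k)),
          Lp.coeFn_smul (c j) (F (T j)), hFT j, ih] with x hx1 hx2 hx3 hx4
        rw [hx1]
        simp only [Pi.add_apply, hx2, Pi.smul_apply, hx3, hx4, Finset.sum_insert hnot,
          smul_eq_mul]
        ring
    exact key _
  -- pointwise bound on the multiplier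
  have hmult : ∀ a b x, ‖∑ k ∈ Finset.Ioc a b,
      c k * ((fejerSymbol (n (k+1)) x - fejerSymbol (n k) x : ℝ) : ℂ)‖
      ≤ M * (1 - fejerSymbol (n (a+1)) x) := by
    intro a b x
    have hφnn : ∀ k, fejerSymbol (n k) x ≤ fejerSymbol (n (k+1)) x :=
      fun k => fejerSymbol_mono (hnmono (Nat.le_succ k)) x
    calc ‖∑ k ∈ Finset.Ioc a b,
        c k * ((fejerSymbol (n (k+1)) x - fejerSymbol (n k) x : ℝ) : ℂ)‖
        ≤ ∑ k ∈ Finset.Ioc a b,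
          ‖c k * ((fejerSymbol (n (k+1)) x - fejerSymbol (n k) x : ℝ) : ℂ)‖ :=
          norm_sum_le _ _
      _ ≤ ∑ k ∈ Finset.Ioc a b, M * (fejerSymbol (n (k+1)) x - fejerSymbol (n k) x) := by
          apply Finset.sum_le_sum
          intro k _
          rw [norm_mul, Complex.norm_real, Real.norm_eq_abs,
            abs_of_nonneg (by linarith [hφnn k])]
          exact mul_le_mul_of_nonneg_right (hcM k) (by linarith [hφnn k])
      _ = M * ∑ k ∈ Finset.Ioc a b, (fejerSymbol (n (k+1)) x - fejerSymbol (n k) x) := by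
          rw [Finset.mul_sum]
      _ ≤ M * (1 - fejerSymbol (n (a+1)) x) := by
          apply mul_le_mul_of_nonneg_left _ hMnn
          rcases Nat.lt_or_ge b a with h | h
          · rw [Finset.Ioc_eq_empty (by omega)]
            simp only [Finset.sum_empty]
            linarith [fejerSymbol_le_one (n (a+1)) x]
          · rw [sum_Ioc_telescope (fun k => fejerSymbol (n k) x) h]
            linarith [fejerSymbol_le_one (n (b+1)) x]
  -- the dominating quantity
  set Tq : ℕ → ℝ≥0∞ := fun j =>
    eLpNorm (fun x => (1 - fejerSymbol (n j) x) * ‖u x‖) 2 volume with hTqdef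
  have hone_sub_mem : ∀ j x, 0 ≤ 1 - fejerSymbol (n j) x ∧ 1 - fejerSymbol (n j) x ≤ 1 := by
    intro j x
    exact ⟨by linarith [fejerSymbol_le_one (n j) x], by linarith [fejerSymbol_nonneg (n j) x]⟩
  have hTq_le : ∀ j, Tq j ≤ eLpNorm u 2 volume := by
    intro j
    apply eLpNorm_mono
    intro x
    obtain ⟨h1, h2⟩ := hone_sub_mem j x
    rw [Real.norm_eq_abs, abs_of_nonneg (mul_nonneg h1 (norm_nonneg _))]
    calc (1 - fejerSymbol (n j) x) * ‖u x‖ ≤ 1 * ‖u x‖ :=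
        mul_le_mul_of_nonneg_right h2 (norm_nonneg _)
      _ = ‖u x‖ := one_mul _
  have hTq_ne_top : ∀ j, Tq j ≠ ∞ :=
    fun j => ne_top_of_le_ne_top hu.2.ne (hTq_le j)
  have hTq_anti : ∀ {i j}, i ≤ j → Tq j ≤ Tq i := by
    intro i j hij
    apply eLpNorm_mono
    intro x
    have h1 := (hone_sub_mem j x).1
    have h2 := (hone_sub_mem i x).1
    have hφ : fejerSymbol (n i) x ≤ fejerSymbol (n j) x := fejerSymbol_mono (hnmono hij) x
    rw [Real.norm_eq_abs, abs_of_nonneg (mul_nonneg h1 (norm_nonneg _)), Real.norm_eq_abs,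
      abs_of_nonneg (mul_nonneg h2 (norm_nonneg _))]
    exact mul_le_mul_of_nonneg_right (by linarith) (norm_nonneg _)
  -- norm bound on partial sums
  have hkey : ∀ a b, ‖S a b‖ ≤ M * (Tq (a+1)).toReal := by
    intro a b
    have hnorm : ‖S a b‖ = (eLpNorm (F (S a b) : ℝ → ℂ) 2 volume).toReal := by
      rw [← F.norm_map (S a b), Lp.norm_def]
    rw [hnorm, eLpNorm_congr_ae (hFS a b)]
    have hle : eLpNorm (fun x => (∑ k ∈ Finset.Ioc a b,
        c k * ((fejerSymbol (n (k+1)) x - fejerSymbol (n k) x : ℝ) : ℂ)) * u x) 2 volume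
        ≤ eLpNorm (M • fun x => (1 - fejerSymbol (n (a+1)) x) * ‖u x‖) 2 volume := by
      apply eLpNorm_mono_ae_real
      apply Filter.Eventually.of_forall
      intro x
      have h := hmult a b x
      calc ‖(∑ k ∈ Finset.Ioc a b,
            c k * ((fejerSymbol (n (k+1)) x - fejerSymbol (n k) x : ℝ) : ℂ)) * u x‖
          = ‖∑ k ∈ Finset.Ioc a b,
            c k * ((fejerSymbol (n (k+1)) x - fejerSymbol (n k) x : ℝ) : ℂ)‖ * ‖u x‖ :=
          norm_mul _ _
        _ ≤ (M * (1 - fejerSymbol (n (a+1)) x)) * ‖u x‖ :=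
          mul_le_mul_of_nonneg_right h (norm_nonneg _)
        _ = (M • fun x => (1 - fejerSymbol (n (a+1)) x) * ‖u x‖) x := by
          simp only [Pi.smul_apply, smul_eq_mul]; ring
    rw [eLpNorm_const_smul] at hle
    have hfin : ((‖M‖₊ : ℝ≥0∞) * Tq (a+1)) ≠ ∞ :=
      ENNReal.mul_ne_top ENNReal.coe_ne_top (hTq_ne_top _)
    calc (eLpNorm (fun x => (∑ k ∈ Finset.Ioc a b,
          c k * ((fejerSymbol (n (k+1)) x - fejerSymbol (n k) x : ℝ) : ℂ)) * u x) 2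
          volume).toReal
        ≤ ((‖M‖₊ : ℝ≥0∞) * Tq (a+1)).toReal := ENNReal.toReal_mono hfin hle
      _ = M * (Tq (a+1)).toReal := by
          rw [ENNReal.toReal_mul, ENNReal.coe_toReal, coe_nnnorm, Real.norm_eq_abs,
            abs_of_nonneg hMnn]
  -- Tq tends to 0
  have hTq0 : Tendsto Tq atTop (nhds 0) := by
    have hum : AEMeasurable (fun x => ‖u x‖) volume :=
      (Lp.aestronglyMeasurable (F f)).norm.aemeasurable
    set L : ℕ → ℝ≥0∞ := fun j =>
      ∫⁻ x, (‖(1 - fejerSymbol (n j) x) * ‖u x‖‖₊ : ℝ≥0∞) ^ (2:ℝ) ∂volume with hLdef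
    have hTqL : ∀ j, Tq j = (L j) ^ (1/(2:ℝ)) := by
      intro j
      have h0 : Tq j = eLpNorm (fun x => (1 - fejerSymbol (n j) x) * ‖u x‖) 2 volume := rfl
      rw [h0, eLpNorm_eq_lintegral_rpow_enorm_toReal two_ne_zero ENNReal.ofNat_ne_top,
        show ((2:ℝ≥0∞)).toReal = (2:ℝ) by norm_num]
      rfl
    have hufin : ∫⁻ x, (‖u x‖₊ : ℝ≥0∞) ^ (2:ℝ) ∂volume ≠ ∞ := by
      have h2 := lintegral_rpow_enorm_lt_top_of_eLpNorm_lt_top (p := 2) two_ne_zero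
        ENNReal.ofNat_ne_top hu.2
      rw [show ((2:ℝ≥0∞)).toReal = (2:ℝ) by norm_num] at h2
      exact h2.ne
    have hL0 : Tendsto L atTop (nhds 0) := by
      have h := tendsto_lintegral_of_dominated_convergence' (μ := volume)
        (F := fun j x => (‖(1 - fejerSymbol (n j) x) * ‖u x‖‖₊ : ℝ≥0∞) ^ (2:ℝ))
        (f := fun _ => 0)
        (fun x => (‖u x‖₊ : ℝ≥0∞) ^ (2:ℝ)) ?_ ?_ hufin ?_
      · simpa only [lintegral_zero] using h
      · intro j
        have hcont : Continuous (fun x : ℝ => 1 - fejerSymbol (n j) x) := by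
          unfold fejerSymbol
          fun_prop
        have hmeas : AEMeasurable (fun x => (1 - fejerSymbol (n j) x) * ‖u x‖) volume :=
          hcont.aemeasurable.mul hum
        exact (ENNReal.continuous_rpow_const.measurable).comp_aemeasurable hmeas.enorm
      · intro j
        apply Filter.Eventually.of_forall
        intro x
        have h1 := (hone_sub_mem j x).1
        have h2 := (hone_sub_mem j x).2
        apply ENNReal.rpow_le_rpow _ (by norm_num)
        rw [ENNReal.coe_le_coe, ← NNReal.coe_le_coe, coe_nnnorm, coe_nnnorm,
          Real.norm_eq_abs, abs_of_nonneg (mul_nonneg h1 (norm_nonneg _))]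
        calc (1 - fejerSymbol (n j) x) * ‖u x‖ ≤ 1 * ‖u x‖ :=
            mul_le_mul_of_nonneg_right h2 (norm_nonneg _)
          _ = ‖u x‖ := one_mul _
      · apply Filter.Eventually.of_forall
        intro x
        have hfe : Tendsto (fun j => 1 - fejerSymbol (n j) x) atTop (nhds 0) := by
          have hub : Tendsto (fun j => |x| / ((n j : ℝ) + 1)) atTop (nhds 0) := by
            apply Tendsto.div_atTop tendsto_const_nhds
            exact tendsto_atTop_add_const_right _ 1 hntend
          apply squeeze_zero (fun j => (hone_sub_mem j x).1)
            (fun j => one_sub_fejerSymbol_le (n j) x) hub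
        have hge : Tendsto (fun j => (1 - fejerSymbol (n j) x) * ‖u x‖) atTop (nhds 0) := by
          simpa using hfe.mul_const ‖u x‖
        have h3 : Tendsto (fun j => (‖(1 - fejerSymbol (n j) x) * ‖u x‖‖₊ : ℝ≥0∞)) atTop
            (nhds 0) := by
          rw [show ((0:ℝ≥0∞)) = ((0:ℝ≥0) : ℝ≥0∞) from rfl]
          exact ENNReal.tendsto_coe.mpr (by simpa using hge.nnnorm)
        have h4 := h3.ennrpow_const (2:ℝ)
        rw [show ((0:ℝ≥0∞) ^ (2:ℝ)) = 0 from ENNReal.zero_rpow_of_pos (by norm_num)] at h4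
        exact h4
    have hfinal := hL0.ennrpow_const (1/(2:ℝ))
    rw [show ((0:ℝ≥0∞) ^ (1/(2:ℝ))) = 0 from ENNReal.zero_rpow_of_pos (by norm_num)] at hfinal
    exact hfinal.congr (fun j => (hTqL j).symm)
  -- toReal of Tq tends to 0
  have hTqR0 : Tendsto (fun j => M * (Tq j).toReal) atTop (nhds 0) := by
    have h1 : Tendsto (fun j => (Tq j).toReal) atTop (nhds 0) := by
      have := (ENNReal.tendsto_toReal (a := 0) (by norm_num)).comp hTq0
      simpa [Function.comp_def] using this
    simpa using h1.const_mul M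
  -- Cauchy sequence
  have hcauchy : CauchySeq (fun N => S 0 N) := by
    apply cauchySeq_of_le_tendsto_0 (fun N => M * (Tq (N+1)).toReal) _
      (hTqR0.comp (tendsto_add_atTop_nat 1))
    intro p q N hp hq
    wlog hpq : p ≤ q generalizing p q
    · rw [dist_comm]
      exact this q p hq hp (le_of_not_ge hpq)
    have hsplit : S 0 q - S 0 p = S p q := by
      rw [hSdef]
      simp only
      rw [← Finset.sum_Ioc_consecutive _ (Nat.zero_le p) hpq]
      abel
    rw [dist_eq_norm, ← neg_sub, norm_neg, hsplit]
    calc ‖S p q‖ ≤ M * (Tq (p+1)).toReal := hkey p q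
      _ ≤ M * (Tq (N+1)).toReal := by
        apply mul_le_mul_of_nonneg_left _ hMnn
        apply ENNReal.toReal_mono (hTq_ne_top _)
        exact hTq_anti (Nat.succ_le_succ hp)
  obtain ⟨g, hg⟩ := cauchySeq_tendsto_of_complete hcauchy
  refine ⟨g, ?_, ?_⟩
  · have : (fun N => ∑ k ∈ Finset.Icc 1 N, c k • (σ (n (k + 1)) f - σ (n k) f))
        = fun N => S 0 N := by
      funext N
      rw [show Finset.Icc 1 N = Finset.Ioc 0 N by ext k; simp only [Finset.mem_Icc, Finset.mem_Ioc]; omega]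
    rw [this]
    exact hg
  · have hbound : ∀ N, ‖S 0 N‖ ≤ M * ‖f‖ := by
      intro N
      calc ‖S 0 N‖ ≤ M * (Tq 1).toReal := hkey 0 N
        _ ≤ M * ‖f‖ := by
          apply mul_le_mul_of_nonneg_left _ hMnn
          have h1 : (Tq 1).toReal ≤ (eLpNorm u 2 volume).toReal :=
            ENNReal.toReal_mono hu.2.ne (hTq_le 1)
          have h2 : (eLpNorm u 2 volume).toReal = ‖F f‖ := (Lp.norm_def (F f)).symm
          rw [h2, F.norm_map] at h1
          exact h1
    have hlim : Tendsto (fun N => ‖S 0 N‖) atTop (nhds ‖g‖) := hg.norm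
    have := le_of_tendsto hlim (Filter.Eventually.of_forall hbound)
    linarith
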